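/- Let d ∈ ℕ, let O ⊆ ℝ^d be an open set, let u_n : O → ℝ (n ∈ ℕ₀) be functions, and let F_n : O × ℝ × ℝ^d × S_d → ℝ (n ∈ ℕ₀) be degenerate elliptic functions such that F₀ is continuous. Assume that sup_{(x,r,p,A) ∈ K} |F_n(x,r,p,A) − F₀(x,r,p,A)| → 0 as n → ∞ for every compact set K ⊆ O × ℝ × ℝ^d × S_d, that sup_{x ∈ K'} |u_n(x) − u₀(x)| → 0 as n → ∞ for every compact set K' ⊆ O, and that for every n ≥ 1 the function u_n is a viscosity solution of F_n = 0. Then u₀ is a viscosity solution of F₀ = 0. -/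

import Mathlib

open Real

/-- The gradient of `φ : ℝ^d → ℝ` at `x`, as the vector of partial derivatives. -/
noncomputable def vecGrad {d : ℕ} (φ : (Fin d → ℝ) → ℝ) (x : Fin d → ℝ) : Fin d → ℝ :=
  fun i => fderiv ℝ φ x (Pi.single i 1)

/-- The Hessian of `φ : ℝ^d → ℝ` at `x`, as the matrix of second partial derivatives. -/
noncomputable def vecHess {d : ℕ} (φ : (Fin d → ℝ) → ℝ) (x : Fin d → ℝ) :
    Matrix (Fin d) (Fin d) ℝ :=
  Matrix.of fun i j => fderiv ℝ (fun y => fderiv ℝ φ y (Pi.single j 1)) x (Pi.single i 1)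

/-- `F : O × ℝ × ℝ^d × S_d → ℝ` is degenerate elliptic if
`F(x,r,p,A) ≤ F(x,r,p,B)` whenever `A ≥ B` (i.e. `A - B` is positive semidefinite). -/
def DegenerateElliptic {d : ℕ} (O : Set (Fin d → ℝ))
    (F : (Fin d → ℝ) → ℝ → (Fin d → ℝ) → Matrix (Fin d) (Fin d) ℝ → ℝ) : Prop :=
  ∀ x ∈ O, ∀ (r : ℝ) (p : Fin d → ℝ) (A B : Matrix (Fin d) (Fin d) ℝ),
    A.IsSymm → B.IsSymm → (A - B).PosSemidef → F x r p A ≤ F x r p B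

/-- `u` is a viscosity subsolution of `F = 0` on the open set `O`: `u` is upper
semicontinuous and `F(x, φ(x), ∇φ(x), Hess φ(x)) ≤ 0` for every `C²` function `φ`
with `φ(x) = u(x)` and `φ ≥ u` on `O`. -/
def IsViscositySubsolution {d : ℕ} (O : Set (Fin d → ℝ))
    (F : (Fin d → ℝ) → ℝ → (Fin d → ℝ) → Matrix (Fin d) (Fin d) ℝ → ℝ)
    (u : (Fin d → ℝ) → ℝ) : Prop :=
  UpperSemicontinuousOn u O ∧
    ∀ φ : (Fin d → ℝ) → ℝ, ContDiffOn ℝ 2 φ O → ∀ x ∈ O, φ x = u x →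
      (∀ y ∈ O, u y ≤ φ y) → F x (φ x) (vecGrad φ x) (vecHess φ x) ≤ 0

/-- `u` is a viscosity supersolution of `F = 0` on the open set `O`: `u` is lower
semicontinuous and `F(x, φ(x), ∇φ(x), Hess φ(x)) ≥ 0` for every `C²` function `φ`
with `φ(x) = u(x)` and `φ ≤ u` on `O`. -/
def IsViscositySupersolution {d : ℕ} (O : Set (Fin d → ℝ))
    (F : (Fin d → ℝ) → ℝ → (Fin d → ℝ) → Matrix (Fin d) (Fin d) ℝ → ℝ)
    (u : (Fin d → ℝ) → ℝ) : Prop :=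
  LowerSemicontinuousOn u O ∧
    ∀ φ : (Fin d → ℝ) → ℝ, ContDiffOn ℝ 2 φ O → ∀ x ∈ O, φ x = u x →
      (∀ y ∈ O, φ y ≤ u y) → 0 ≤ F x (φ x) (vecGrad φ x) (vecHess φ x)

/-- `u` is a viscosity solution of `F = 0` on the open set `O` if it is both a
viscosity subsolution and a viscosity supersolution. -/
def IsViscositySolution {d : ℕ} (O : Set (Fin d → ℝ))
    (F : (Fin d → ℝ) → ℝ → (Fin d → ℝ) → Matrix (Fin d) (Fin d) ℝ → ℝ)
    (u : (Fin d → ℝ) → ℝ) : Prop :=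
  IsViscositySubsolution O F u ∧ IsViscositySupersolution O F u

open Filter


namespace ViscAux

open Filter Metric Set TopologicalSpace
open scoped Classical

variable {d : ℕ}

lemma vecGrad_congr {f g : (Fin d → ℝ) → ℝ} {x : Fin d → ℝ} (h : f =ᶠ[nhds x] g) :
    vecGrad f x = vecGrad g x := by
  funext i; simp only [vecGrad, h.fderiv_eq]

lemma vecHess_congr {f g : (Fin d → ℝ) → ℝ} {x : Fin d → ℝ} (h : f =ᶠ[nhds x] g) :
    vecHess f x = vecHess g x := by
  funext i j
  have h2 : (fun y => fderiv ℝ f y (Pi.single j 1)) =ᶠ[nhds x]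
      (fun y => fderiv ℝ g y (Pi.single j 1)) := by
    filter_upwards [eventually_eventually_nhds.2 h] with w hw
    rw [Filter.EventuallyEq.fderiv_eq (hw : f =ᶠ[nhds w] g)]
  simp only [vecHess, Matrix.of_apply, h2.fderiv_eq]

lemma vecGrad_add_const {f : (Fin d → ℝ) → ℝ} {x : Fin d → ℝ} (c : ℝ) :
    vecGrad (fun y => f y + c) x = vecGrad f x := by
  funext i; simp only [vecGrad, fderiv_add_const]

lemma vecHess_add_const {f : (Fin d → ℝ) → ℝ} {x : Fin d → ℝ} (c : ℝ) :
    vecHess (fun y => f y + c) x = vecHess f x := by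
  funext i j
  simp only [vecHess, Matrix.of_apply]
  have h2 : (fun y => fderiv ℝ (fun w => f w + c) y (Pi.single j 1)) =
      (fun y => fderiv ℝ f y (Pi.single j 1)) := by
    funext w; rw [fderiv_add_const]
  rw [h2]

lemma vecGrad_neg {f : (Fin d → ℝ) → ℝ} {x : Fin d → ℝ} :
    vecGrad (fun y => -f y) x = -vecGrad f x := by
  funext i; simp only [vecGrad, fderiv_fun_neg, Pi.neg_apply, ContinuousLinearMap.neg_apply]

lemma vecHess_neg {f : (Fin d → ℝ) → ℝ} {x : Fin d → ℝ} :
    vecHess (fun y => -f y) x = -vecHess f x := by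
  funext i j
  simp only [vecHess, Matrix.of_apply, Matrix.neg_apply]
  have h2 : (fun y => fderiv ℝ (fun w => -f w) y (Pi.single j 1)) =
      (fun y => -(fderiv ℝ f y (Pi.single j 1))) := by
    funext w; rw [fderiv_fun_neg]; rfl
  rw [h2, fderiv_fun_neg]
  rfl

lemma vecHess_eq {φ : (Fin d → ℝ) → ℝ} {x : Fin d → ℝ} (hφ : ContDiffAt ℝ 2 φ x) (i j : Fin d) :
    vecHess φ x i j = fderiv ℝ (fderiv ℝ φ) x (Pi.single i 1) (Pi.single j 1) := by
  have hd : DifferentiableAt ℝ (fderiv ℝ φ) x :=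
    (hφ.fderiv_right (m := 1) (by norm_num)).differentiableAt one_ne_zero
  simp only [vecHess, Matrix.of_apply]
  rw [fderiv_clm_apply hd (differentiableAt_const _)]
  simp

lemma vecHess_isSymm {φ : (Fin d → ℝ) → ℝ} {x : Fin d → ℝ} (hφ : ContDiffAt ℝ 2 φ x) :
    (vecHess φ x).IsSymm := by
  have hs := hφ.isSymmSndFDerivAt (by simp [minSmoothness_of_isRCLikeNormedField])
  apply Matrix.IsSymm.ext
  intro i j
  rw [vecHess_eq hφ, vecHess_eq hφ]
  exact hs _ _

lemma vecHess_continuousOn {φ : (Fin d → ℝ) → ℝ} {O : Set (Fin d → ℝ)}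
    (hφ : ContDiffOn ℝ 2 φ O) (hO : IsOpen O) :
    ContinuousOn (fun y => vecHess φ y) O := by
  have hc : ContinuousOn (fderiv ℝ (fderiv ℝ φ)) O :=
    (hφ.fderiv_of_isOpen hO (by norm_num)).continuousOn_fderiv_of_isOpen hO le_rfl
  have heq : ∀ y ∈ O, vecHess φ y =
      Matrix.of fun i j => fderiv ℝ (fderiv ℝ φ) y (Pi.single i 1) (Pi.single j 1) := by
    intro y hy
    funext i j
    exact vecHess_eq (hφ.contDiffAt (hO.mem_nhds hy)) i j
  apply ContinuousOn.congr _ heq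
  apply continuousOn_pi.2
  intro i
  apply continuousOn_pi.2
  intro j
  exact ((ContinuousLinearMap.apply ℝ ℝ (Pi.single j 1)).continuous.comp
    ((ContinuousLinearMap.apply ℝ ((Fin d → ℝ) →L[ℝ] ℝ)
      (Pi.single i 1)).continuous)).comp_continuousOn hc

lemma vecGrad_continuousOn {φ : (Fin d → ℝ) → ℝ} {O : Set (Fin d → ℝ)}
    (hφ : ContDiffOn ℝ 2 φ O) (hO : IsOpen O) :
    ContinuousOn (fun y => vecGrad φ y) O := by
  have hc : ContinuousOn (fderiv ℝ φ) O :=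
    hφ.continuousOn_fderiv_of_isOpen hO (by norm_num)
  apply continuousOn_pi.2
  intro i
  exact (ContinuousLinearMap.apply ℝ ℝ (Pi.single i 1)).continuous.comp_continuousOn hc

/-- quadratic penalty -/
noncomputable def qf (z : Fin d → ℝ) (ε : ℝ) (y : Fin d → ℝ) : ℝ :=
  ε * ∑ i, (y i - z i) ^ 2

noncomputable def qD (z : Fin d → ℝ) (ε : ℝ) (y : Fin d → ℝ) :
    (Fin d → ℝ) →L[ℝ] ℝ :=
  ε • ∑ i, (2 * (y i - z i)) • (ContinuousLinearMap.proj (R := ℝ) (φ := fun _ : Fin d => ℝ) i)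

variable {z y v x : Fin d → ℝ} {ε : ℝ}

lemma qf_contDiff : ContDiff ℝ 2 (qf z ε) := by
  apply contDiff_const.mul
  apply ContDiff.sum
  intro i _
  exact ((ContinuousLinearMap.proj (R := ℝ) (φ := fun _ : Fin d => ℝ) i).contDiff.sub
    contDiff_const).pow 2

lemma qf_hasFDerivAt : HasFDerivAt (qf z ε) (qD z ε y) y := by
  have h1 : ∀ i : Fin d, HasFDerivAt (fun w : Fin d → ℝ => (w i - z i) ^ 2)
      ((2 * (y i - z i)) • (ContinuousLinearMap.proj (R := ℝ) (φ := fun _ : Fin d => ℝ) i)) y := by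
    intro i
    have hb : HasFDerivAt (fun w : Fin d → ℝ => w i - z i)
        (ContinuousLinearMap.proj (R := ℝ) (φ := fun _ : Fin d => ℝ) i) y :=
      (ContinuousLinearMap.proj (R := ℝ) (φ := fun _ : Fin d => ℝ) i).hasFDerivAt.sub_const _
    have hm : HasFDerivAt (fun w : Fin d → ℝ => (w i - z i) * (w i - z i)) _ y := hb.mul hb
    have h2 : (fun w : Fin d → ℝ => (w i - z i) * (w i - z i)) =
        fun w : Fin d → ℝ => (w i - z i) ^ 2 := by funext w; ring
    rw [h2] at hm
    have h3 : (2 * (y i - z i)) • (ContinuousLinearMap.proj (R := ℝ) (φ := fun _ : Fin d => ℝ) i)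
        = (y i - z i) • (ContinuousLinearMap.proj (R := ℝ) (φ := fun _ : Fin d => ℝ) i)
          + (y i - z i) • (ContinuousLinearMap.proj (R := ℝ) (φ := fun _ : Fin d => ℝ) i) := by
      rw [two_mul, add_smul]
    rw [h3]
    exact hm
  have hs := HasFDerivAt.fun_sum (fun i (_ : i ∈ Finset.univ) => h1 i)
  have hcm := hs.const_mul ε
  have := (by simpa [qf, qD, smul_smul] using hcm :
    HasFDerivAt (fun y => ε * ∑ i, (y i - z i) ^ 2) (qD z ε y) y); exact this

lemma qD_apply : qD z ε y v = ε * ∑ i, 2 * (y i - z i) * v i := by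
  simp [qD, ContinuousLinearMap.sum_apply, smul_smul, mul_assoc]

lemma qD_single (j : Fin d) : qD z ε y (Pi.single j 1) = ε * (2 * (y j - z j)) := by
  rw [qD_apply]
  congr 1
  rw [Finset.sum_eq_single j]
  · simp
  · intro i _ hij
    simp [Pi.single_eq_of_ne hij]
  · simp

lemma qD_self : qD z ε z = 0 := by
  ext v
  rw [qD_apply]
  simp

variable {φ : (Fin d → ℝ) → ℝ} {O : Set (Fin d → ℝ)}

lemma psi_contDiffOn (hφ : ContDiffOn ℝ 2 φ O) :
    ContDiffOn ℝ 2 (fun w => φ w + qf z ε w) O :=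
  hφ.add qf_contDiff.contDiffOn

lemma psi_fderiv (hφ : ContDiffOn ℝ 2 φ O) (hO : IsOpen O) (hy : y ∈ O) :
    fderiv ℝ (fun w => φ w + qf z ε w) y = fderiv ℝ φ y + qD z ε y := by
  have hd : DifferentiableAt ℝ φ y :=
    ((hφ.contDiffAt (hO.mem_nhds hy)).differentiableAt (by norm_num))
  exact (hd.hasFDerivAt.add qf_hasFDerivAt).fderiv

lemma psi_vecGrad_center (hφ : ContDiffOn ℝ 2 φ O) (hO : IsOpen O) (hx : x ∈ O) :
    vecGrad (fun w => φ w + qf x ε w) x = vecGrad φ x := by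
  funext i
  simp only [vecGrad, psi_fderiv hφ hO hx, ContinuousLinearMap.add_apply, qD_self]
  simp

lemma psi_vecHess_center (hφ : ContDiffOn ℝ 2 φ O) (hO : IsOpen O) (hx : x ∈ O) :
    vecHess (fun w => φ w + qf x ε w) x
      = vecHess φ x + (2 * ε) • (1 : Matrix (Fin d) (Fin d) ℝ) := by
  funext i j
  have hev : (fun w => fderiv ℝ (fun w' => φ w' + qf x ε w') w (Pi.single j 1)) =ᶠ[nhds x]
      (fun w => fderiv ℝ φ w (Pi.single j 1) + (ε * 2) * (w j - x j)) := by
    filter_upwards [hO.mem_nhds hx] with w hw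
    rw [psi_fderiv hφ hO hw]
    simp only [ContinuousLinearMap.add_apply, qD_single]
    ring
  have hc : DifferentiableAt ℝ (fderiv ℝ φ) x :=
    ((hφ.contDiffAt (hO.mem_nhds hx)).fderiv_right (m := 1) (by norm_num)).differentiableAt one_ne_zero
  have hA : DifferentiableAt ℝ (fun w => fderiv ℝ φ w (Pi.single j 1)) x :=
    hc.clm_apply (differentiableAt_const _)
  have hB : HasFDerivAt (fun w : Fin d → ℝ => (ε * 2) * (w j - x j))
      ((ε * 2) • (ContinuousLinearMap.proj (R := ℝ) (φ := fun _ : Fin d => ℝ) j)) x :=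
    ((ContinuousLinearMap.proj (R := ℝ) (φ := fun _ : Fin d => ℝ) j).hasFDerivAt.sub_const
      _).const_mul _
  have hsum : fderiv ℝ (fun w => fderiv ℝ φ w (Pi.single j 1) + (ε * 2) * (w j - x j)) x
      = fderiv ℝ (fun w => fderiv ℝ φ w (Pi.single j 1)) x
        + (ε * 2) • (ContinuousLinearMap.proj (R := ℝ) (φ := fun _ : Fin d => ℝ) j) := by
    rw [fderiv_fun_add hA hB.differentiableAt, hB.fderiv]
  simp only [vecHess, Matrix.of_apply, Matrix.add_apply, Matrix.smul_apply, Matrix.one_apply]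
  rw [Filter.EventuallyEq.fderiv_eq hev, hsum]
  simp only [ContinuousLinearMap.add_apply, ContinuousLinearMap.smul_apply,
    ContinuousLinearMap.proj_apply, smul_eq_mul]
  rw [Pi.single_apply]
  split_ifs with h1 h2 h3
  · ring
  · exact absurd h1.symm h2
  · exact absurd h3.symm h1
  · ring

lemma symm_add_smul_one {A : Matrix (Fin d) (Fin d) ℝ} (hA : A.IsSymm) (c : ℝ) :
    (A + c • (1 : Matrix (Fin d) (Fin d) ℝ)).IsSymm := by
  unfold Matrix.IsSymm at *
  rw [Matrix.transpose_add, hA, Matrix.transpose_smul, Matrix.transpose_one]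

lemma cont_of_usc_lsc {f : (Fin d → ℝ) → ℝ}
    (hu : UpperSemicontinuousOn f O) (hl : LowerSemicontinuousOn f O) :
    ContinuousOn f O := by
  intro x hx
  have h1 := hu x hx
  have h2 := hl x hx
  exact tendsto_order.2 ⟨fun a ha => h2 a ha, fun b hb => h1 b hb⟩

lemma sq_dist_le (hd : 0 < d) {η : ℝ} (hη : 0 < η)
    (h : η ≤ dist y x) : η ^ 2 ≤ ∑ i, (y i - x i) ^ 2 := by
  have hnl : ¬ (dist y x < η) := not_lt.2 h
  rw [dist_pi_lt_iff hη] at hnl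
  push_neg at hnl
  obtain ⟨i, hi⟩ := hnl
  have h1 : η ^ 2 ≤ (y i - x i) ^ 2 := by
    have habs : η ≤ |y i - x i| := by rwa [Real.dist_eq] at hi
    calc η ^ 2 ≤ |y i - x i| ^ 2 := by
          apply pow_le_pow_left₀ hη.le habs
      _ = (y i - x i) ^ 2 := sq_abs _
  exact h1.trans (Finset.single_le_sum (f := fun j => (y j - x j) ^ 2)
    (fun j _ => sq_nonneg _) (Finset.mem_univ i))

lemma tuo_neg {u : ℕ → (Fin d → ℝ) → ℝ} {f : (Fin d → ℝ) → ℝ} {s : Set (Fin d → ℝ)}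
    (h : TendstoUniformlyOn (fun n x => u n x) f atTop s) :
    TendstoUniformlyOn (fun n x => -(u n x)) (fun x => -f x) atTop s := by
  rw [tendstoUniformlyOn_iff] at h ⊢
  intro δ hδ
  filter_upwards [h δ hδ] with n hn x hx
  simpa [dist_neg_neg] using hn x hx

lemma tuo_neg' {α : Type*} [TopologicalSpace α] {u : ℕ → α → ℝ} {f : α → ℝ} {s : Set α}
    (h : TendstoUniformlyOn u f atTop s) :
    TendstoUniformlyOn (fun n x => -(u n x)) (fun x => -f x) atTop s := by
  rw [tendstoUniformlyOn_iff] at h ⊢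
  intro δ hδ
  filter_upwards [h δ hδ] with n hn x hx
  simpa [dist_neg_neg] using hn x hx

lemma exists_smooth_dominating {O : Set (Fin d → ℝ)} (hO : IsOpen O)
    {h : (Fin d → ℝ) → ℝ} (hh : ContinuousOn h O)
    {z : Fin d → ℝ} {ρ : ℝ} (hρ : 0 < ρ) (hball : Metric.closedBall z ρ ⊆ O)
    (hneg : ∀ y ∈ Metric.closedBall z ρ, h y ≤ 0) :
    ∃ g : (Fin d → ℝ) → ℝ, ContDiffOn ℝ 2 g O ∧ (∀ y ∈ Metric.ball z (ρ/2), g y = 0) ∧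
      ∀ y ∈ O, h y ≤ g y := by
  set O' : Opens (Fin d → ℝ) := ⟨O, hO⟩
  haveI : LocallyCompactSpace O' := hO.locallyCompactSpace
  haveI : SigmaCompactSpace O' := sigmaCompactSpace_of_locallyCompact_secondCountable
  set t : O' → Set ℝ := fun y =>
    if (y : Fin d → ℝ) ∈ Metric.closedBall z (ρ/2) then {(0:ℝ)} else Set.Ici (h y) with ht_def
  have ht : ∀ y, Convex ℝ (t y) := by
    intro y
    by_cases hy : (y : Fin d → ℝ) ∈ Metric.closedBall z (ρ/2)
    · simp only [t, if_pos hy]; exact convex_singleton 0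
    · simp only [t, if_neg hy]; exact convex_Ici _
  have Hloc : ∀ x : O', ∃ U ∈ nhds x, ∃ g : O' → ℝ,
      ContMDiffOn (modelWithCornersSelf ℝ (Fin d → ℝ)) (modelWithCornersSelf ℝ ℝ) ((⊤ : ℕ∞) : WithTop ℕ∞) g U ∧
      ∀ y ∈ U, g y ∈ t y := by
    intro x
    by_cases hx : dist (x : Fin d → ℝ) z < ρ
    · refine ⟨Subtype.val ⁻¹' (Metric.ball z ρ), ?_, fun _ => 0, contMDiffOn_const, ?_⟩
      · exact (Metric.isOpen_ball.preimage continuous_subtype_val).mem_nhds hx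
      · intro y hy
        by_cases hy2 : (y : Fin d → ℝ) ∈ Metric.closedBall z (ρ/2)
        · simp only [t, if_pos hy2]; exact rfl
        · simp only [t, if_neg hy2, Set.mem_Ici]
          exact hneg _ (Metric.ball_subset_closedBall hy)
    · have hx2 : ρ/2 < dist (x : Fin d → ℝ) z := by linarith [not_lt.1 hx]
      have hcont : ContinuousAt (fun y : O' => h y) x :=
        ((hh.continuousAt (hO.mem_nhds x.2)).comp continuousAt_subtype_val :)
      have h1 : ∀ᶠ y : O' in nhds x, h y < h x + 1 :=
        hcont (Iio_mem_nhds (by linarith))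
      have hdc : ContinuousAt (fun y : O' => dist (y : Fin d → ℝ) z) x :=
        (continuous_subtype_val.dist continuous_const).continuousAt
      have h2 : ∀ᶠ y : O' in nhds x, (y : Fin d → ℝ) ∉ Metric.closedBall z (ρ/2) :=
        (hdc.eventually (eventually_gt_nhds hx2)).mono
          (fun y hy => by simpa [Metric.mem_closedBall] using not_le.2 hy)
      refine ⟨_, (h1.and h2), fun _ => h x + 1, contMDiffOn_const, ?_⟩
      rintro y ⟨hy1, hy2⟩
      simp only [t, if_neg hy2, Set.mem_Ici]
      exact le_of_lt hy1
  obtain ⟨g, hg⟩ := exists_contMDiffMap_forall_mem_convex_of_local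
    (modelWithCornersSelf ℝ (Fin d → ℝ)) ht Hloc
  refine ⟨fun y => if hy : y ∈ O then g ⟨y, hy⟩ else 0, ?_, ?_, ?_⟩
  · intro y hy
    have hsm : ContMDiffAt (modelWithCornersSelf ℝ (Fin d → ℝ)) (modelWithCornersSelf ℝ ℝ) ((⊤ : ℕ∞) : WithTop ℕ∞)
        (fun w => if hw : w ∈ O then g ⟨w, hw⟩ else 0) y := by
      rw [← contMDiffAt_subtype_iff (U := O') (x := ⟨y, hy⟩)]
      have heq : (fun w : O' => if hw : (w : Fin d → ℝ) ∈ O then g ⟨w, hw⟩ else 0) = ⇑g := by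
        funext w
        have hw : (w : Fin d → ℝ) ∈ O := w.2
        simp [hw]
      rw [heq]
      exact g.contMDiff ⟨y, hy⟩
    have hcd := contMDiffAt_iff_contDiffAt.1 hsm
    refine (hcd.of_le ?_).contDiffWithinAt
    have h22 : ((2:ℕ∞) : WithTop ℕ∞) ≤ ((⊤:ℕ∞) : WithTop ℕ∞) := by exact_mod_cast le_top
    simpa using h22
  · intro y hy
    have hyO : y ∈ O :=
      hball (Metric.ball_subset_closedBall (Metric.ball_subset_ball (by linarith) hy))
    have hmem := hg ⟨y, hyO⟩
    simp only [t, if_pos (Metric.ball_subset_closedBall hy)] at hmem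
    simp only [hyO, dif_pos]
    exact hmem
  · intro y hy
    have hmem := hg ⟨y, hy⟩
    by_cases hy2 : y ∈ Metric.closedBall z (ρ/2)
    · simp only [t, if_pos hy2] at hmem
      simp only [hy, dif_pos]
      rw [hmem]
      exact hneg _ (Metric.closedBall_subset_closedBall (by linarith) hy2)
    · simp only [t, if_neg hy2, Set.mem_Ici] at hmem
      simpa [hy] using hmem

end ViscAux

namespace ViscAux

open Filter Metric Set TopologicalSpace
open scoped Classical

/-- The big one: limit of subsolution property. -/
lemma sub_limit {d : ℕ} (hd : 0 < d) {O : Set (Fin d → ℝ)} (hO : IsOpen O)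
    (u : ℕ → (Fin d → ℝ) → ℝ)
    (F : ℕ → (Fin d → ℝ) → ℝ → (Fin d → ℝ) → Matrix (Fin d) (Fin d) ℝ → ℝ)
    (hF0cont : ContinuousOn
      (fun q : (Fin d → ℝ) × ℝ × (Fin d → ℝ) × Matrix (Fin d) (Fin d) ℝ =>
        F 0 q.1 q.2.1 q.2.2.1 q.2.2.2)
      (O ×ˢ (Set.univ : Set ℝ) ×ˢ (Set.univ : Set (Fin d → ℝ)) ×ˢ
        {A : Matrix (Fin d) (Fin d) ℝ | A.IsSymm}))
    (hFconv : ∀ K : Set ((Fin d → ℝ) × ℝ × (Fin d → ℝ) × Matrix (Fin d) (Fin d) ℝ),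
      IsCompact K →
      K ⊆ O ×ˢ (Set.univ : Set ℝ) ×ˢ (Set.univ : Set (Fin d → ℝ)) ×ˢ
        {A : Matrix (Fin d) (Fin d) ℝ | A.IsSymm} →
      TendstoUniformlyOn (fun n q => F n q.1 q.2.1 q.2.2.1 q.2.2.2)
        (fun q => F 0 q.1 q.2.1 q.2.2.1 q.2.2.2) atTop K)
    (huconv : ∀ K : Set (Fin d → ℝ), IsCompact K → K ⊆ O →
      TendstoUniformlyOn (fun n x => u n x) (u 0) atTop K)
    (hucont : ∀ n : ℕ, 1 ≤ n → ContinuousOn (u n) O)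
    (hu0cont : ContinuousOn (u 0) O)
    (hsub : ∀ n : ℕ, 1 ≤ n → ∀ φ : (Fin d → ℝ) → ℝ, ContDiffOn ℝ 2 φ O → ∀ x ∈ O, φ x = u n x →
      (∀ y ∈ O, u n y ≤ φ y) → F n x (φ x) (vecGrad φ x) (vecHess φ x) ≤ 0) :
    ∀ φ : (Fin d → ℝ) → ℝ, ContDiffOn ℝ 2 φ O → ∀ x ∈ O, φ x = u 0 x →
      (∀ y ∈ O, u 0 y ≤ φ y) → F 0 x (φ x) (vecGrad φ x) (vecHess φ x) ≤ 0 := by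
  intro φ hφ x hx hφx hφge
  set S : Set ((Fin d → ℝ) × ℝ × (Fin d → ℝ) × Matrix (Fin d) (Fin d) ℝ) :=
    O ×ˢ (Set.univ : Set ℝ) ×ˢ (Set.univ : Set (Fin d → ℝ)) ×ˢ
      {A : Matrix (Fin d) (Fin d) ℝ | A.IsSymm} with hS_def
  set F0b : (Fin d → ℝ) × ℝ × (Fin d → ℝ) × Matrix (Fin d) (Fin d) ℝ → ℝ :=
    fun q => F 0 q.1 q.2.1 q.2.2.1 q.2.2.2 with hF0b_def
  -- a closed ball inside O
  obtain ⟨ρ, hρ, hcb⟩ : ∃ ρ > 0, closedBall x ρ ⊆ O := by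
    rcases nhds_basis_closedBall.mem_iff.1 (hO.mem_nhds hx) with ⟨ρ, hρ, h⟩
    exact ⟨ρ, hρ, h⟩
  have hxcb : x ∈ closedBall x ρ := mem_closedBall_self hρ.le
  have hHφsymm : (vecHess φ x).IsSymm := vecHess_isSymm (hφ.contDiffAt (hO.mem_nhds hx))
  -- main step : for every ε > 0
  suffices H : ∀ ε : ℝ, 0 < ε →
      F 0 x (φ x) (vecGrad φ x) (vecHess φ x + (2 * ε) • (1 : Matrix (Fin d) (Fin d) ℝ)) ≤ 0 by
    -- let ε → 0
    have hk : ∀ k : ℕ, F0b (x, φ x, vecGrad φ x,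
        vecHess φ x + (2 * (1 / (k + 1) : ℝ)) • (1 : Matrix (Fin d) (Fin d) ℝ)) ≤ 0 :=
      fun k => H _ (by positivity)
    have htm : Tendsto (fun k : ℕ => vecHess φ x +
        (2 * (1 / (k + 1) : ℝ)) • (1 : Matrix (Fin d) (Fin d) ℝ)) atTop (nhds (vecHess φ x)) := by
      have h1 : Tendsto (fun k : ℕ => (2 * (1 / (k + 1) : ℝ))) atTop (nhds 0) := by
        have := tendsto_one_div_add_atTop_nhds_zero_nat (𝕜 := ℝ)
        have h2 := this.const_mul (2:ℝ)
        simpa using h2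
      have h2 : Tendsto (fun k : ℕ => (2 * (1 / (k + 1) : ℝ)) • (1 : Matrix (Fin d) (Fin d) ℝ))
          atTop (nhds 0) := by
        have := h1.smul_const (1 : Matrix (Fin d) (Fin d) ℝ)
        simpa using this
      have h3 := h2.const_add (vecHess φ x)
      simpa using h3
    have hqS : (x, φ x, vecGrad φ x, vecHess φ x) ∈ S := by
      refine ⟨hx, trivial, trivial, hHφsymm⟩
    have htq : Tendsto (fun k : ℕ => ((x, φ x, vecGrad φ x,
        vecHess φ x + (2 * (1 / (k + 1) : ℝ)) • (1 : Matrix (Fin d) (Fin d) ℝ)) :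
        (Fin d → ℝ) × ℝ × (Fin d → ℝ) × Matrix (Fin d) (Fin d) ℝ)) atTop
        (nhdsWithin (x, φ x, vecGrad φ x, vecHess φ x) S) := by
      rw [tendsto_nhdsWithin_iff]
      constructor
      · exact (tendsto_const_nhds.prodMk_nhds (tendsto_const_nhds.prodMk_nhds
          (tendsto_const_nhds.prodMk_nhds htm)))
      · filter_upwards with k
        exact ⟨hx, trivial, trivial, symm_add_smul_one hHφsymm _⟩
    have hlim : Tendsto (fun k : ℕ => F0b (x, φ x, vecGrad φ x,
        vecHess φ x + (2 * (1 / (k + 1) : ℝ)) • (1 : Matrix (Fin d) (Fin d) ℝ))) atTop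
        (nhds (F0b (x, φ x, vecGrad φ x, vecHess φ x))) :=
      (hF0cont _ hqS).tendsto.comp htq
    exact le_of_tendsto hlim (Filter.Eventually.of_forall hk)
  -- fix ε
  intro ε hε
  set ψ : (Fin d → ℝ) → ℝ := fun w => φ w + qf x ε w with hψ_def
  have hψ : ContDiffOn ℝ 2 ψ O := psi_contDiffOn hφ
  have hψx : ψ x = φ x := by simp [hψ_def, qf]
  have hcbO : closedBall x ρ ⊆ O := hcb
  -- choose maximum points
  have hex : ∀ n : ℕ, 1 ≤ n → ∃ w ∈ closedBall x ρ,
      IsMaxOn (fun y => u n y - ψ y) (closedBall x ρ) w := by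
    intro n hn
    exact (isCompact_closedBall x ρ).exists_isMaxOn ⟨x, hxcb⟩
      (((hucont n hn).mono hcbO).sub (hψ.continuousOn.mono hcbO))
  set xseq : ℕ → Fin d → ℝ := fun n => if h : 1 ≤ n then (hex n h).choose else x with hxseq_def
  have hxseq_cb : ∀ n, 1 ≤ n → xseq n ∈ closedBall x ρ := by
    intro n hn; simp only [hxseq_def, dif_pos hn]; exact (hex n hn).choose_spec.1
  have hxseq_max : ∀ n, 1 ≤ n → IsMaxOn (fun y => u n y - ψ y) (closedBall x ρ) (xseq n) := by
    intro n hn; simp only [hxseq_def, dif_pos hn]; exact (hex n hn).choose_spec.2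
  -- clustering
  have hclust : ∀ η : ℝ, 0 < η → ∀ᶠ n in atTop, dist (xseq n) x < η := by
    intro η hη
    set η' := min η ρ with hη'_def
    have hη' : 0 < η' := lt_min hη hρ
    set δ := ε * η' ^ 2 / 3 with hδ_def
    have hδ : 0 < δ := by positivity
    have h1 := tendstoUniformlyOn_iff.1 (huconv _ (isCompact_closedBall x ρ) hcbO) δ hδ
    filter_upwards [h1, eventually_ge_atTop 1] with n hn1 hn2
    by_contra hcon
    push_neg at hcon
    have hfar : η' ≤ dist (xseq n) x := le_trans (min_le_left _ _) hcon
    have hsum : η' ^ 2 ≤ ∑ i, (xseq n i - x i) ^ 2 := sq_dist_le hd hη' hfar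
    have hxnO : xseq n ∈ O := hcbO (hxseq_cb n hn2)
    have e1 : u 0 (xseq n) - ψ (xseq n) ≤ -(3 * δ) := by
      have h2 : u 0 (xseq n) ≤ φ (xseq n) := hφge _ hxnO
      have h3 : ε * η' ^ 2 ≤ ε * ∑ i, (xseq n i - x i) ^ 2 :=
        mul_le_mul_of_nonneg_left hsum hε.le
      simp only [hψ_def, qf]
      have : 3 * δ = ε * η' ^ 2 := by rw [hδ_def]; ring
      rw [this]
      nlinarith [h2, h3]
    have e2 : u n (xseq n) - ψ (xseq n) < -(2 * δ) := by
      have := hn1 (xseq n) (hxseq_cb n hn2)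
      rw [Real.dist_eq, abs_lt] at this
      nlinarith [e1, this.1, this.2]
    have e3 : -δ < u n x - ψ x := by
      have := hn1 x hxcb
      rw [Real.dist_eq, abs_lt] at this
      have h4 : u 0 x = ψ x := by rw [hψx, hφx]
      nlinarith [this.1, this.2]
    have e4 := hxseq_max n hn2 hxcb
    simp only [mem_setOf_eq] at e4
    nlinarith [e2, e3, e4]
  have hxconv : Tendsto xseq atTop (nhds x) := by
    rw [Metric.tendsto_atTop]
    intro η hη
    obtain ⟨N, hN⟩ := (hclust η hη).exists_forall_of_atTop
    exact ⟨N, fun n hn => hN n hn⟩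
  -- convergence of values
  set rseq : ℕ → ℝ := fun n => u n (xseq n) with hrseq_def
  have hrconv : Tendsto rseq atTop (nhds (u 0 x)) := by
    rw [Metric.tendsto_atTop]
    intro δ hδ
    have hcw : ContinuousWithinAt (u 0) O x := hu0cont x hx
    have h5 : ∀ᶠ y in nhdsWithin x O, dist (u 0 y) (u 0 x) < δ/2 :=
      hcw (Metric.ball_mem_nhds _ (by positivity))
    rw [eventually_nhdsWithin_iff] at h5
    obtain ⟨η, hη, hball⟩ := Metric.eventually_nhds_iff.1 h5
    have h6 := tendstoUniformlyOn_iff.1 (huconv _ (isCompact_closedBall x ρ) hcbO) (δ/2)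
      (by positivity)
    have h7 := (hclust η hη).and (h6.and (eventually_ge_atTop 1))
    obtain ⟨N, hN⟩ := h7.exists_forall_of_atTop
    refine ⟨N, fun n hn => ?_⟩
    obtain ⟨ha, hb, hc⟩ := hN n hn
    have hxnO : xseq n ∈ O := hcbO (hxseq_cb n hc)
    calc dist (rseq n) (u 0 x) ≤ dist (rseq n) (u 0 (xseq n)) + dist (u 0 (xseq n)) (u 0 x) :=
          dist_triangle _ _ _
      _ < δ/2 + δ/2 := by
          apply add_lt_add
          · rw [dist_comm]; exact hb (xseq n) (hxseq_cb n hc)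
          · exact hball ha hxnO
      _ = δ := by ring
  -- the key eventual inequality
  have hkey : ∀ᶠ n in atTop, F n (xseq n) (rseq n)
      (vecGrad ψ (xseq n)) (vecHess ψ (xseq n)) ≤ 0 := by
    filter_upwards [hclust (ρ/2) (by positivity), eventually_ge_atTop 1] with n hn1 hn2
    set z := xseq n with hz_def
    have hzO : z ∈ O := hcbO (hxseq_cb n hn2)
    have hzball : closedBall z (ρ/2) ⊆ closedBall x ρ := by
      apply closedBall_subset_closedBall'
      rw [dist_comm] at hn1 ⊢
      linarith [hn1.le]
    set c : ℝ := u n z - ψ z with hc_def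
    have hmax := hxseq_max n hn2
    have hhcont : ContinuousOn (fun y => u n y - ψ y - c) O :=
      ((hucont n hn2).sub hψ.continuousOn).sub continuousOn_const
    have hhneg : ∀ y ∈ closedBall z (ρ/2), u n y - ψ y - c ≤ 0 := by
      intro y hy
      have := hmax (hzball hy)
      simp only [mem_setOf_eq] at this
      simp only [hc_def]
      linarith
    obtain ⟨g, hg1, hg2, hg3⟩ := exists_smooth_dominating hO hhcont (by positivity : (0:ℝ) < ρ/2)
      (hzball.trans hcbO) hhneg
    set φn : (Fin d → ℝ) → ℝ := fun y => (ψ y + c) + g y with hφn_def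
    have hφn_cd : ContDiffOn ℝ 2 φn O := (hψ.add contDiffOn_const).add hg1
    have hgz : g z = 0 := hg2 z (mem_ball_self (by positivity))
    have hφnz : φn z = u n z := by simp [hφn_def, hgz, hc_def]
    have hφnge : ∀ y ∈ O, u n y ≤ φn y := by
      intro y hy
      have := hg3 y hy
      simp only [hφn_def]
      linarith
    have happ := hsub n hn2 φn hφn_cd z hzO hφnz hφnge
    -- identify derivatives
    have hev : φn =ᶠ[nhds z] fun y => ψ y + c := by
      filter_upwards [isOpen_ball.mem_nhds (mem_ball_self
        (by positivity : (0:ℝ) < ρ/2/2))] with w hw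
      simp [hφn_def, hg2 w hw]
    have hgrad : vecGrad φn z = vecGrad ψ z := by
      rw [vecGrad_congr hev, vecGrad_add_const]
    have hhess : vecHess φn z = vecHess ψ z := by
      rw [vecHess_congr hev, vecHess_add_const]
    rw [hφnz, hgrad, hhess] at happ
    exact happ
  -- now pass to the limit
  have hGc : ContinuousOn (fun y => vecGrad ψ y) O := vecGrad_continuousOn hψ hO
  have hHc : ContinuousOn (fun y => vecHess ψ y) O := vecHess_continuousOn hψ hO
  have hGx : vecGrad ψ x = vecGrad φ x := psi_vecGrad_center hφ hO hx
  have hHx : vecHess ψ x = vecHess φ x + (2 * ε) • (1 : Matrix (Fin d) (Fin d) ℝ) :=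
    psi_vecHess_center hφ hO hx
  set K : Set ((Fin d → ℝ) × ℝ × (Fin d → ℝ) × Matrix (Fin d) (Fin d) ℝ) :=
    (closedBall x ρ) ×ˢ (Icc (u 0 x - 1) (u 0 x + 1)) ×ˢ
      ((fun y => vecGrad ψ y) '' closedBall x ρ) ×ˢ
      ((fun y => vecHess ψ y) '' closedBall x ρ) with hK_def
  have hKcomp : IsCompact K := by
    refine (isCompact_closedBall x ρ).prod (isCompact_Icc.prod (IsCompact.prod ?_ ?_))
    · exact (isCompact_closedBall x ρ).image_of_continuousOn (hGc.mono hcbO)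
    · exact (isCompact_closedBall x ρ).image_of_continuousOn (hHc.mono hcbO)
  have hKS : K ⊆ S := by
    rintro ⟨a, r, p, A⟩ ⟨ha, hr, hp, hA⟩
    refine ⟨hcbO ha, trivial, trivial, ?_⟩
    obtain ⟨y, hy, rfl⟩ := hA
    exact vecHess_isSymm (hψ.contDiffAt (hO.mem_nhds (hcbO hy)))
  set q : (Fin d → ℝ) × ℝ × (Fin d → ℝ) × Matrix (Fin d) (Fin d) ℝ :=
    (x, u 0 x, vecGrad ψ x, vecHess ψ x) with hq_def
  have hqS : q ∈ S := ⟨hx, trivial, trivial, by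
    rw [hq_def, hHx]; exact symm_add_smul_one hHφsymm _⟩
  set qn : ℕ → (Fin d → ℝ) × ℝ × (Fin d → ℝ) × Matrix (Fin d) (Fin d) ℝ :=
    fun n => (xseq n, rseq n, vecGrad ψ (xseq n), vecHess ψ (xseq n)) with hqn_def
  have hxconvO : Tendsto xseq atTop (nhdsWithin x O) := by
    rw [tendsto_nhdsWithin_iff]
    refine ⟨hxconv, ?_⟩
    filter_upwards [eventually_ge_atTop 1] with n hn
    exact hcbO (hxseq_cb n hn)
  have hqconv : Tendsto qn atTop (nhds q) := by
    refine hxconv.prodMk_nhds (hrconv.prodMk_nhds (Tendsto.prodMk_nhds ?_ ?_))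
    · exact (hGc x hx).tendsto.comp hxconvO
    · exact (hHc x hx).tendsto.comp hxconvO
  have hqnS : ∀ᶠ n in atTop, qn n ∈ S := by
    filter_upwards [eventually_ge_atTop 1] with n hn
    have hxnO : xseq n ∈ O := hcbO (hxseq_cb n hn)
    exact ⟨hxnO, trivial, trivial, vecHess_isSymm (hψ.contDiffAt (hO.mem_nhds hxnO))⟩
  have hqnK : ∀ᶠ n in atTop, qn n ∈ K := by
    have h1 : ∀ᶠ n in atTop, rseq n ∈ Icc (u 0 x - 1) (u 0 x + 1) :=
      hrconv (Icc_mem_nhds (by linarith) (by linarith))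
    filter_upwards [eventually_ge_atTop 1, h1] with n hn hr
    exact ⟨hxseq_cb n hn, hr, mem_image_of_mem _ (hxseq_cb n hn),
      mem_image_of_mem _ (hxseq_cb n hn)⟩
  -- δ-argument
  have hgoal : F0b q ≤ 0 := by
    have hstep : ∀ δ : ℝ, 0 < δ → F0b q ≤ 0 + δ := by
      intro δ hδ
      have e1 := tendstoUniformlyOn_iff.1 (hFconv K hKcomp hKS) (δ/2) (by positivity)
      have e2 : Tendsto (fun n => F0b (qn n)) atTop (nhds (F0b q)) := by
        apply (hF0cont q hqS).tendsto.comp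
        rw [tendsto_nhdsWithin_iff]
        exact ⟨hqconv, hqnS⟩
      have e2' : ∀ᶠ n in atTop, dist (F0b (qn n)) (F0b q) < δ/2 :=
        e2 (Metric.ball_mem_nhds _ (by positivity))
      have hcomb := (e1.and (e2'.and (hqnK.and hkey))).exists
      obtain ⟨n, h1, h2, h3, h4⟩ := hcomb
      have h5 := h1 (qn n) h3
      rw [Real.dist_eq, abs_lt] at h2 h5
      have h6 : F0b (qn n) = F n (qn n).1 (qn n).2.1 (qn n).2.2.1 (qn n).2.2.2
          + (F0b (qn n) - F n (qn n).1 (qn n).2.1 (qn n).2.2.1 (qn n).2.2.2) := by ring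
      have h7 : F n (qn n).1 (qn n).2.1 (qn n).2.2.1 (qn n).2.2.2 ≤ 0 := h4
      nlinarith [h2.1, h2.2, h5.1, h5.2, h7]
    have := le_of_forall_pos_le_add hstep
    simpa using this
  -- translate
  have : F0b q = F 0 x (φ x) (vecGrad φ x)
      (vecHess φ x + (2 * ε) • (1 : Matrix (Fin d) (Fin d) ℝ)) := by
    rw [hq_def, hF0b_def]
    simp only []
    rw [hGx, hHx, hφx]
  rw [this] at hgoal
  exact hgoal

end ViscAux

/-- locally uniform limits of viscosity solutions are viscosity
solutions: if `F n → F 0` uniformly on compact subsets of `O × ℝ × ℝ^d × S_d`,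
`u n → u 0` uniformly on compact subsets of `O`, `F 0` is continuous, each `F n`
is degenerate elliptic, and `u n` is a viscosity solution of `F n = 0` for every
`n ≥ 1`, then `u 0` is a viscosity solution of `F 0 = 0`. -/
theorem viscosity_solution_of_locally_uniform_limits
    {d : ℕ} (hd : 0 < d) (O : Set (Fin d → ℝ)) (hO : IsOpen O)
    (u : ℕ → (Fin d → ℝ) → ℝ)
    (F : ℕ → (Fin d → ℝ) → ℝ → (Fin d → ℝ) → Matrix (Fin d) (Fin d) ℝ → ℝ)
    (hFell : ∀ n, DegenerateElliptic O (F n))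
    (hF0cont : ContinuousOn
      (fun q : (Fin d → ℝ) × ℝ × (Fin d → ℝ) × Matrix (Fin d) (Fin d) ℝ =>
        F 0 q.1 q.2.1 q.2.2.1 q.2.2.2)
      (O ×ˢ (Set.univ : Set ℝ) ×ˢ (Set.univ : Set (Fin d → ℝ)) ×ˢ
        {A : Matrix (Fin d) (Fin d) ℝ | A.IsSymm}))
    (hFconv : ∀ K : Set ((Fin d → ℝ) × ℝ × (Fin d → ℝ) × Matrix (Fin d) (Fin d) ℝ),
      IsCompact K →
      K ⊆ O ×ˢ (Set.univ : Set ℝ) ×ˢ (Set.univ : Set (Fin d → ℝ)) ×ˢ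
        {A : Matrix (Fin d) (Fin d) ℝ | A.IsSymm} →
      TendstoUniformlyOn (fun n q => F n q.1 q.2.1 q.2.2.1 q.2.2.2)
        (fun q => F 0 q.1 q.2.1 q.2.2.1 q.2.2.2) atTop K)
    (huconv : ∀ K : Set (Fin d → ℝ), IsCompact K → K ⊆ O →
      TendstoUniformlyOn (fun n x => u n x) (u 0) atTop K)
    (hsol : ∀ n : ℕ, 1 ≤ n → IsViscositySolution O (F n) (u n)) :
    IsViscositySolution O (F 0) (u 0) := by
  classical
  have hucont : ∀ n : ℕ, 1 ≤ n → ContinuousOn (u n) O := fun n hn =>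
    ViscAux.cont_of_usc_lsc (hsol n hn).1.1 (hsol n hn).2.1
  have hu0cont : ContinuousOn (u 0) O := by
    intro x hx
    obtain ⟨ρ, hρ, hcb⟩ : ∃ ρ > 0, Metric.closedBall x ρ ⊆ O := by
      rcases Metric.nhds_basis_closedBall.mem_iff.1 (hO.mem_nhds hx) with ⟨ρ, h1, h2⟩
      exact ⟨ρ, h1, h2⟩
    have hev : ∀ᶠ n in atTop, ContinuousOn (fun y => u n y) (Metric.closedBall x ρ) := by
      filter_upwards [eventually_ge_atTop 1] with n hn
      exact (hucont n hn).mono hcb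
    have hc := (huconv _ (isCompact_closedBall x ρ) hcb).continuousOn hev.frequently
    exact ((hc x (Metric.mem_closedBall_self hρ.le)).continuousAt
      (Metric.closedBall_mem_nhds x hρ)).continuousWithinAt
  constructor
  · exact ⟨hu0cont.upperSemicontinuousOn,
      ViscAux.sub_limit hd hO u F hF0cont hFconv huconv hucont hu0cont
        (fun n hn => (hsol n hn).1.2)⟩
  · refine ⟨hu0cont.lowerSemicontinuousOn, ?_⟩
    -- apply the subsolution limit lemma to the negated problem
    set G : ℕ → (Fin d → ℝ) → ℝ → (Fin d → ℝ) → Matrix (Fin d) (Fin d) ℝ → ℝ :=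
      fun n a r p A => -(F n a (-r) (-p) (-A)) with hG_def
    set v : ℕ → (Fin d → ℝ) → ℝ := fun n y => -(u n y) with hv_def
    set σ : ((Fin d → ℝ) × ℝ × (Fin d → ℝ) × Matrix (Fin d) (Fin d) ℝ) →
        ((Fin d → ℝ) × ℝ × (Fin d → ℝ) × Matrix (Fin d) (Fin d) ℝ) :=
      fun q => (q.1, -q.2.1, -q.2.2.1, -q.2.2.2) with hσ_def
    set S : Set ((Fin d → ℝ) × ℝ × (Fin d → ℝ) × Matrix (Fin d) (Fin d) ℝ) :=
      O ×ˢ (Set.univ : Set ℝ) ×ˢ (Set.univ : Set (Fin d → ℝ)) ×ˢ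
        {A : Matrix (Fin d) (Fin d) ℝ | A.IsSymm} with hS_def
    have hσc : Continuous σ := by
      refine continuous_fst.prodMk (Continuous.prodMk ?_ (Continuous.prodMk ?_ ?_))
      · exact (continuous_fst.comp continuous_snd).neg
      · exact ((continuous_fst.comp continuous_snd).comp continuous_snd).neg
      · exact ((continuous_snd.comp continuous_snd).comp continuous_snd).neg
    have hσmaps : Set.MapsTo σ S S := by
      rintro ⟨a, r, p, A⟩ ⟨ha, -, -, hA⟩
      refine ⟨ha, trivial, trivial, ?_⟩
      simp only [Set.mem_setOf_eq] at hA ⊢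
      unfold Matrix.IsSymm at hA ⊢
      rw [Matrix.transpose_neg, hA]
    have hG0cont : ContinuousOn
        (fun q : (Fin d → ℝ) × ℝ × (Fin d → ℝ) × Matrix (Fin d) (Fin d) ℝ =>
          G 0 q.1 q.2.1 q.2.2.1 q.2.2.2) S := by
      have hcomp : ContinuousOn
          (fun q : (Fin d → ℝ) × ℝ × (Fin d → ℝ) × Matrix (Fin d) (Fin d) ℝ =>
            F 0 (σ q).1 (σ q).2.1 (σ q).2.2.1 (σ q).2.2.2) S :=
        hF0cont.comp hσc.continuousOn hσmaps
      exact hcomp.neg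
    have hGconv : ∀ K : Set ((Fin d → ℝ) × ℝ × (Fin d → ℝ) × Matrix (Fin d) (Fin d) ℝ),
        IsCompact K → K ⊆ S →
        TendstoUniformlyOn (fun n q => G n q.1 q.2.1 q.2.2.1 q.2.2.2)
          (fun q => G 0 q.1 q.2.1 q.2.2.1 q.2.2.2) atTop K := by
      intro K hK hKS
      have h1 := hFconv (σ '' K) (hK.image hσc) (Set.image_subset_iff.2
        (fun q hq => hσmaps (hKS hq)))
      have h2 := (h1.comp σ).mono (Set.subset_preimage_image σ K)
      exact ViscAux.tuo_neg' h2
    have hvconv : ∀ K : Set (Fin d → ℝ), IsCompact K → K ⊆ O →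
        TendstoUniformlyOn (fun n x => v n x) (v 0) atTop K := by
      intro K hK hKO
      exact ViscAux.tuo_neg' (huconv K hK hKO)
    have hvcont : ∀ n : ℕ, 1 ≤ n → ContinuousOn (v n) O := fun n hn => (hucont n hn).neg
    have hv0cont : ContinuousOn (v 0) O := hu0cont.neg
    have hvsub : ∀ n : ℕ, 1 ≤ n → ∀ φ : (Fin d → ℝ) → ℝ, ContDiffOn ℝ 2 φ O → ∀ x ∈ O,
        φ x = v n x → (∀ y ∈ O, v n y ≤ φ y) →
        G n x (φ x) (vecGrad φ x) (vecHess φ x) ≤ 0 := by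
      intro n hn φ hφcd x hx hφx hφge
      have hnegcd : ContDiffOn ℝ 2 (fun y => -φ y) O := hφcd.neg
      have h1 : (fun y => -φ y) x = u n x := by
        show -φ x = u n x
        rw [hφx]; simp [hv_def]
      have h2 : ∀ y ∈ O, (fun y => -φ y) y ≤ u n y := by
        intro y hy
        have hh := hφge y hy
        simp only [hv_def] at hh
        show -φ y ≤ u n y
        linarith
      have h3 := (hsol n hn).2.2 (fun y => -φ y) hnegcd x hx h1 h2
      rw [ViscAux.vecGrad_neg, ViscAux.vecHess_neg] at h3
      beta_reduce at h3
      simp only [hG_def]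
      linarith [h3]
    have hmain := ViscAux.sub_limit hd hO v G hG0cont hGconv hvconv hvcont hv0cont hvsub
    intro φ hφcd x hx hφx hφle
    have hnegcd : ContDiffOn ℝ 2 (fun y => -φ y) O := hφcd.neg
    have h1 : (fun y => -φ y) x = v 0 x := by
      show -φ x = v 0 x
      rw [hφx]
    have h2 : ∀ y ∈ O, v 0 y ≤ (fun y => -φ y) y := by
      intro y hy
      have hh := hφle y hy
      show v 0 y ≤ -φ y
      simp only [hv_def]
      linarith
    have h3 := hmain (fun y => -φ y) hnegcd x hx h1 h2
    rw [ViscAux.vecGrad_neg, ViscAux.vecHess_neg] at h3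
    simp only [hG_def] at h3
    beta_reduce at h3
    simp only [neg_neg] at h3
    linarith
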